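/- For f ∈ L^1(k,s), the trace-norm (Schatten 1-norm) of the multilevel block Toeplitz matrix satisfies ‖T_n(f)‖_1 ≤ (n̂/(2π)^k) ‖f‖_{L^1} for all n ∈ ℕ^k. -/

import Mathlib

open MeasureTheory Matrix Filter
open scoped Real Kronecker ComplexOrder

noncomputable section

/-- The cube `(-π,π)^k`. -/
def Ik (k : ℕ) : Set (Fin k → ℝ) := Set.univ.pi fun _ => Set.Ioo (-π) π

/-- Fourier coefficients of a matrix-valued symbol. -/
def fourierCoeffM (k s : ℕ) (f : (Fin k → ℝ) → Matrix (Fin s) (Fin s) ℂ)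
    (j : Fin k → ℤ) : Matrix (Fin s) (Fin s) ℂ :=
  fun a b => (((2 * π : ℝ) ^ k)⁻¹ : ℂ) *
    ∫ x in Ik k, Complex.exp (-Complex.I * ∑ i, (j i : ℂ) * (x i : ℂ)) * f x a b

/-- Multilevel block Toeplitz matrix. -/
def toeplitz (k s : ℕ) (n : Fin k → ℕ) (f : (Fin k → ℝ) → Matrix (Fin s) (Fin s) ℂ) :
    Matrix ((∀ i, Fin (n i)) × Fin s) ((∀ i, Fin (n i)) × Fin s) ℂ :=
  fun p q => fourierCoeffM k s f (fun i => (p.1 i : ℤ) - (q.1 i : ℤ)) p.2 q.2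

/-- Singular values of a square complex matrix. -/
def singularValues {m : Type*} [Fintype m] [DecidableEq m] (A : Matrix m m ℂ) : m → ℝ :=
  fun i => Real.sqrt ((Matrix.posSemidef_conjTranspose_mul_self A).1.eigenvalues i)

/-- Trace norm (Schatten 1-norm). -/
def traceNorm {m : Type*} [Fintype m] [DecidableEq m] (A : Matrix m m ℂ) : ℝ :=
  ∑ i, singularValues A i

/-- Spectral norm (largest singular value). -/
def specNorm {m : Type*} [Fintype m] [DecidableEq m] (A : Matrix m m ℂ) : ℝ :=
  ⨆ i, singularValues A i

/-- Essential numerical range of a matrix-valued function over `G`. -/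
def ENR {k s : ℕ} (G : Set (Fin k → ℝ)) (f : (Fin k → ℝ) → Matrix (Fin s) (Fin s) ℂ) :
    Set ℂ :=
  {r : ℂ | ∀ ε > 0, 0 < volume {t ∈ G | ∃ v : EuclideanSpace ℂ (Fin s),
    ‖v‖ = 1 ∧ dist (star (v : Fin s → ℂ) ⬝ᵥ f t *ᵥ (v : Fin s → ℂ)) r < ε}}

/-- Essential range of a scalar function over `G`. -/
def essRange {k : ℕ} (G : Set (Fin k → ℝ)) (h : (Fin k → ℝ) → ℂ) : Set ℂ :=
  {r : ℂ | ∀ ε > 0, 0 < volume {t ∈ G | dist (h t) r < ε}}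

/-- Essential range of a matrix-valued function (union of essential ranges of
eigenvalue functions). -/
def matER {k s : ℕ} (G : Set (Fin k → ℝ)) (f : (Fin k → ℝ) → Matrix (Fin s) (Fin s) ℂ) :
    Set ℂ :=
  {r : ℂ | ∀ ε > 0, 0 < volume {t ∈ G | ∃ w : ℂ, (f t).charpoly.IsRoot w ∧ dist w r < ε}}

/-- `f` is weakly sectorial. -/
def WeaklySectorial {k s : ℕ} (f : (Fin k → ℝ) → Matrix (Fin s) (Fin s) ℂ) : Prop :=
  ∃ (a : ℂ) (c : ℝ), ‖a‖ = 1 ∧ 0 ≤ c ∧ ∀ w ∈ ENR (Ik k) f, c ≤ ((starRingEnd ℂ) a * w).re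

/-- Rayleigh-quotient minimal eigenvalue. -/
def minEig {s : ℕ} (M : Matrix (Fin s) (Fin s) ℂ) : ℝ :=
  ⨅ v : {v : EuclideanSpace ℂ (Fin s) // ‖v‖ = 1},
    (star ((v : EuclideanSpace ℂ (Fin s)) : Fin s → ℂ) ⬝ᵥ
      M *ᵥ ((v : EuclideanSpace ℂ (Fin s)) : Fin s → ℂ)).re

/-- `f` is sectorial. -/
def Sectorial {k s : ℕ} (f : (Fin k → ℝ) → Matrix (Fin s) (Fin s) ℂ) : Prop :=
  ∃ (a : ℂ) (c : ℝ), ‖a‖ = 1 ∧ 0 ≤ c ∧ (∀ w ∈ ENR (Ik k) f, c ≤ ((starRingEnd ℂ) a * w).re) ∧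
    ¬ (∀ᵐ x ∂(volume.restrict (Ik k)),
        minEig ((starRingEnd ℂ a) • f x + a • (f x)ᴴ) = c)


namespace TN

/-- forget the `L²` structure -/
def pv {m : Type*} [Fintype m] (x : EuclideanSpace ℂ m) : m → ℂ := WithLp.equiv 2 _ x

def nrm {m : Type*} [Fintype m] (v : m → ℂ) : ℝ := ‖(WithLp.equiv 2 (m → ℂ)).symm v‖

variable {m : Type*} [Fintype m] [DecidableEq m]

omit [DecidableEq m] in
lemma nrm_pv (x : EuclideanSpace ℂ m) : nrm (pv x) = ‖x‖ := rfl

omit [DecidableEq m] in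
lemma nrm_nonneg (v : m → ℂ) : 0 ≤ nrm v := norm_nonneg _

omit [DecidableEq m] in
lemma nrm_eq_sqrt (v : m → ℂ) : nrm v = Real.sqrt (∑ i, ‖v i‖ ^ 2) := by
  rw [nrm, EuclideanSpace.norm_eq]
  rfl

omit [DecidableEq m] in
lemma nrm_sq (v : m → ℂ) : nrm v ^ 2 = ∑ i, ‖v i‖ ^ 2 := by
  rw [nrm_eq_sqrt, Real.sq_sqrt] ; positivity

omit [DecidableEq m] in
lemma cs_dot (v w : m → ℂ) : ‖star v ⬝ᵥ w‖ ≤ nrm v * nrm w := by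
  calc ‖star v ⬝ᵥ w‖ = ‖(inner ℂ ((WithLp.equiv 2 (m → ℂ)).symm v)
      ((WithLp.equiv 2 (m → ℂ)).symm w) : ℂ)‖ := by rw [dotProduct_comm]; rfl
  _ ≤ _ := norm_inner_le_norm _ _

omit [DecidableEq m] in
lemma dot_self (v : m → ℂ) : star v ⬝ᵥ v = ((nrm v : ℂ)) ^ 2 := by
  have h : star v ⬝ᵥ v = (inner ℂ ((WithLp.equiv 2 (m → ℂ)).symm v)
      ((WithLp.equiv 2 (m → ℂ)).symm v) : ℂ) := by rw [dotProduct_comm]; rfl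
  rw [h, inner_self_eq_norm_sq_to_K]; norm_cast

omit [DecidableEq m] in
lemma inner_eq_dot (x y : EuclideanSpace ℂ m) :
    (inner ℂ x y : ℂ) = star (pv x) ⬝ᵥ pv y := by
  rw [EuclideanSpace.inner_eq_star_dotProduct, dotProduct_comm]; rfl

omit [DecidableEq m] in
lemma apply_le_nrm (v : m → ℂ) (i : m) : ‖v i‖ ≤ nrm v := by
  rw [nrm_eq_sqrt]
  have : ‖v i‖ ^ 2 ≤ ∑ j, ‖v j‖ ^ 2 :=
    Finset.single_le_sum (f := fun j => ‖v j‖ ^ 2) (fun j _ => by positivity) (Finset.mem_univ i)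
  calc ‖v i‖ = Real.sqrt (‖v i‖ ^ 2) := by rw [Real.sqrt_sq (norm_nonneg _)]
  _ ≤ _ := Real.sqrt_le_sqrt this

lemma dot_eigen2 (A : Matrix m m ℂ) (i j : m) :
    star (A *ᵥ pv ((Matrix.posSemidef_conjTranspose_mul_self A).1.eigenvectorBasis i)) ⬝ᵥ
      (A *ᵥ pv ((Matrix.posSemidef_conjTranspose_mul_self A).1.eigenvectorBasis j)) =
    if i = j then (((Matrix.posSemidef_conjTranspose_mul_self A).1.eigenvalues j : ℝ) : ℂ)
      else 0 := by
  set h := (Matrix.posSemidef_conjTranspose_mul_self A).1 with hh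
  set vi : m → ℂ := pv (h.eigenvectorBasis i)
  set vj : m → ℂ := pv (h.eigenvectorBasis j) with hvj
  have h1 : star (A *ᵥ vi) ⬝ᵥ (A *ᵥ vj) = star vi ⬝ᵥ ((Aᴴ * A) *ᵥ vj) := by
    rw [Matrix.star_mulVec, ← Matrix.dotProduct_mulVec, Matrix.mulVec_mulVec]
  have h2 : (Aᴴ * A) *ᵥ vj = h.eigenvalues j • vj := h.mulVec_eigenvectorBasis j
  have h3 := (orthonormal_iff_ite (𝕜 := ℂ)).mp (h.eigenvectorBasis).orthonormal i j
  rw [inner_eq_dot] at h3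
  rw [h1, h2, dotProduct_smul, h3]
  by_cases hij : i = j <;> simp [hij, smul_eq_mul]

lemma nrm_mulVec_eigen (A : Matrix m m ℂ) (i : m) :
    nrm (A *ᵥ pv ((Matrix.posSemidef_conjTranspose_mul_self A).1.eigenvectorBasis i)) =
      singularValues A i := by
  have h := dot_eigen2 A i i
  rw [if_pos rfl, dot_self] at h
  have h2 : (nrm (A *ᵥ pv ((Matrix.posSemidef_conjTranspose_mul_self A).1.eigenvectorBasis i))) ^ 2
      = (Matrix.posSemidef_conjTranspose_mul_self A).1.eigenvalues i := by
    exact_mod_cast h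
  rw [singularValues, ← h2, Real.sqrt_sq (by unfold nrm; positivity)]

lemma nrm_eigenbasis {M : Matrix m m ℂ} (h : M.IsHermitian) (i : m) :
    nrm (pv (h.eigenvectorBasis i)) = 1 := by
  rw [nrm_pv]
  exact h.eigenvectorBasis.orthonormal.1 i

lemma trace_eq_sum_onb (M : Matrix m m ℂ) (b : OrthonormalBasis m ℂ (EuclideanSpace ℂ m)) :
    M.trace = ∑ i, star (pv (b i)) ⬝ᵥ (M *ᵥ pv (b i)) := by
  classical
  set V : Matrix m m ℂ := Matrix.of (fun p i => pv (b i) p) with hV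
  have hVV : Vᴴ * V = 1 := by
    ext i j
    have := (orthonormal_iff_ite (𝕜 := ℂ)).mp b.orthonormal i j
    rw [inner_eq_dot] at this
    simpa [Matrix.mul_apply, Matrix.conjTranspose_apply, Matrix.one_apply,
      dotProduct, hV] using this
  have hVV' : V * Vᴴ = 1 := mul_eq_one_comm.mp hVV
  have key : ∀ i, star (pv (b i)) ⬝ᵥ (M *ᵥ pv (b i)) = (Vᴴ * M * V) i i := by
    intro i
    simp only [Matrix.mul_apply, Matrix.mulVec, dotProduct, Matrix.conjTranspose_apply,
      hV, Matrix.of_apply, Pi.star_apply, RCLike.star_def, Finset.mul_sum, Finset.sum_mul]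
    rw [Finset.sum_comm]
    apply Finset.sum_congr rfl; intro p _
    apply Finset.sum_congr rfl; intro q _
    ring
  rw [Finset.sum_congr rfl fun i _ => key i]
  have : ∑ i, (Vᴴ * M * V) i i = (Vᴴ * M * V).trace := rfl
  rw [this, Matrix.trace_mul_cycle, hVV', Matrix.one_mul]

lemma singularValues_nonneg (A : Matrix m m ℂ) (i : m) : 0 ≤ singularValues A i :=
  Real.sqrt_nonneg _

lemma traceNorm_nonneg (A : Matrix m m ℂ) : 0 ≤ traceNorm A :=
  Finset.sum_nonneg fun i _ => singularValues_nonneg A i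

/-- Key duality bound. -/
lemma trace_mul_le (A C : Matrix m m ℂ) (c : ℝ)
    (hC : ∀ w : m → ℂ, nrm (C *ᵥ w) ≤ c * nrm w) :
    ‖(A * C).trace‖ ≤ c * traceNorm A := by
  set h := (Matrix.posSemidef_conjTranspose_mul_self A).1 with hh
  set b := h.eigenvectorBasis with hb
  rw [Matrix.trace_mul_comm, trace_eq_sum_onb (C * A) b]
  calc ‖∑ i, star (pv (b i)) ⬝ᵥ ((C * A) *ᵥ pv (b i))‖
      ≤ ∑ i, ‖star (pv (b i)) ⬝ᵥ ((C * A) *ᵥ pv (b i))‖ := norm_sum_le _ _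
    _ ≤ ∑ i, c * singularValues A i := by
        apply Finset.sum_le_sum; intro i _
        rw [← Matrix.mulVec_mulVec]
        calc ‖star (pv (b i)) ⬝ᵥ (C *ᵥ (A *ᵥ pv (b i)))‖
            ≤ nrm (pv (b i)) * nrm (C *ᵥ (A *ᵥ pv (b i))) := cs_dot _ _
          _ ≤ 1 * (c * nrm (A *ᵥ pv (b i))) := by
              rw [nrm_eigenbasis h i]
              exact mul_le_mul_of_nonneg_left (hC _) (by norm_num)
          _ = c * singularValues A i := by rw [one_mul, nrm_mulVec_eigen]
    _ = c * traceNorm A := by rw [← Finset.mul_sum]; rfl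
end TN

namespace TN
variable {m : Type*} [Fintype m] [DecidableEq m]

omit [DecidableEq m] in
lemma trace_mul_vecMulVec (A : Matrix m m ℂ) (v w : m → ℂ) :
    (A * Matrix.vecMulVec v w).trace = w ⬝ᵥ (A *ᵥ v) := by
  simp only [Matrix.trace, Matrix.diag, Matrix.mul_apply, Matrix.vecMulVec_apply,
    Matrix.mulVec, dotProduct, Finset.mul_sum]
  apply Finset.sum_congr rfl; intro p _
  apply Finset.sum_congr rfl; intro q _
  ring

omit [DecidableEq m] in
lemma vecMulVec_mulVec (v u w : m → ℂ) : Matrix.vecMulVec v u *ᵥ w = (u ⬝ᵥ w) • v := by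
  ext p
  simp only [Matrix.mulVec, Matrix.vecMulVec_apply, dotProduct, Pi.smul_apply,
    smul_eq_mul, Finset.sum_mul, Finset.mul_sum]
  apply Finset.sum_congr rfl; intro q _
  ring

omit [DecidableEq m] in
lemma sum_mulVec' {ι : Type*} (t : Finset ι) (M : ι → Matrix m m ℂ) (w : m → ℂ) :
    (∑ i ∈ t, M i) *ᵥ w = ∑ i ∈ t, (M i *ᵥ w) := by
  ext p
  simp only [Matrix.mulVec, dotProduct, Finset.sum_apply, Finset.sum_mul,
    Matrix.sum_apply]
  rw [Finset.sum_comm]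

lemma exists_dual (A : Matrix m m ℂ) : ∃ B : Matrix m m ℂ,
    (∀ w : m → ℂ, nrm (B *ᵥ w) ≤ nrm w) ∧ (A * B).trace = (traceNorm A : ℂ) := by
  classical
  set h := (Matrix.posSemidef_conjTranspose_mul_self A).1 with hh
  set b := h.eigenvectorBasis with hb
  set σ : m → ℝ := singularValues A with hσ
  have hσnn : ∀ i, 0 ≤ σ i := singularValues_nonneg A
  have hlam : ∀ i, h.eigenvalues i = σ i ^ 2 := by
    intro i
    rw [hσ]
    rw [singularValues, Real.sq_sqrt ((Matrix.posSemidef_conjTranspose_mul_self A).eigenvalues_nonneg i)]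
  set c : m → ℝ := fun i => if σ i = 0 then 0 else (σ i)⁻¹ with hc
  set B := ∑ i, (c i : ℂ) • Matrix.vecMulVec (pv (b i)) (star (A *ᵥ pv (b i))) with hB
  set L := (WithLp.linearEquiv 2 ℂ (m → ℂ)).symm with hL
  refine ⟨B, ?_, ?_⟩
  · intro w
    set d : m → ℂ := fun i => (c i : ℂ) * (star (A *ᵥ pv (b i)) ⬝ᵥ w) with hd
    have hBw : B *ᵥ w = ∑ i, d i • pv (b i) := by
      rw [hB, sum_mulVec']
      apply Finset.sum_congr rfl; intro i _
      rw [Matrix.smul_mulVec, vecMulVec_mulVec, hd]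
      rw [smul_smul]
    have hnx : nrm (B *ᵥ w) = ‖(∑ i, d i • b i : EuclideanSpace ℂ m)‖ := by
      have : L (B *ᵥ w) = ∑ i, d i • b i := by
        rw [hBw, map_sum]
        apply Finset.sum_congr rfl; intro i _
        rw [_root_.map_smul]
        rfl
      show ‖L (B *ᵥ w)‖ = _
      rw [this]
    have hx2 : ‖(∑ i, d i • b i : EuclideanSpace ℂ m)‖ ^ 2 = ∑ i, ‖d i‖ ^ 2 := by
      rw [← inner_self_eq_norm_sq (𝕜 := ℂ)]
      rw [b.orthonormal.inner_sum d d Finset.univ]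
      rw [map_sum]
      apply Finset.sum_congr rfl; intro i _
      rw [RCLike.conj_mul]
      norm_cast
    -- Bessel
    set u : {i : m // σ i ≠ 0} → EuclideanSpace ℂ m :=
      fun i => (c i.1 : ℂ) • (L (A *ᵥ pv (b i.1))) with hu
    have hon : Orthonormal ℂ u := by
      rw [orthonormal_iff_ite]
      intro i j
      rw [hu]
      simp only [inner_smul_left, inner_smul_right]
      have : (inner ℂ (L (A *ᵥ pv (b i.1))) (L (A *ᵥ pv (b j.1))) : ℂ)
          = star (A *ᵥ pv (b i.1)) ⬝ᵥ (A *ᵥ pv (b j.1)) := inner_eq_dot _ _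
      rw [this, dot_eigen2 A i.1 j.1]
      by_cases hij : (i : m) = j
      · have : i = j := Subtype.ext hij
        subst this
        rw [if_pos rfl, if_pos rfl, hlam, Complex.conj_ofReal]
        have hci : c i.1 = (σ i.1)⁻¹ := by simp only [hc]; rw [if_neg i.2]
        rw [hci]
        have hne : ((σ i.1 : ℂ)) ≠ 0 := Complex.ofReal_ne_zero.mpr i.2
        push_cast
        field_simp
      · rw [if_neg hij, if_neg (fun hhh => hij (by rw [hhh]))]
        ring
    have hdinner : ∀ i : {i : m // σ i ≠ 0}, (inner ℂ (u i) (L w) : ℂ) = d i.1 := by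
      intro i
      rw [hu]
      simp only [inner_smul_left]
      rw [inner_eq_dot, Complex.conj_ofReal]
      rfl
    have hbessel : ∑ i : {i : m // σ i ≠ 0}, ‖(inner ℂ (u i) (L w) : ℂ)‖ ^ 2 ≤ ‖L w‖ ^ 2 :=
      hon.sum_inner_products_le (L w)
    have hsum : ∑ i, ‖d i‖ ^ 2 ≤ nrm w ^ 2 := by
      have h1 : ∑ i, ‖d i‖ ^ 2 = ∑ i ∈ Finset.univ.filter (fun i => σ i ≠ 0), ‖d i‖ ^ 2 := by
        symm
        apply Finset.sum_filter_of_ne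
        intro i _ hne
        intro h0
        apply hne
        rw [hd] at *
        simp only [hc, if_pos h0, Complex.ofReal_zero, zero_mul] at *
        simp
      have h2 : ∑ i ∈ Finset.univ.filter (fun i => σ i ≠ 0), ‖d i‖ ^ 2
          = ∑ i : {i : m // σ i ≠ 0}, ‖d i.1‖ ^ 2 := by
        rw [← Finset.sum_subtype (Finset.univ.filter (fun i => σ i ≠ 0))
          (fun i => by simp) (fun i => ‖d i‖ ^ 2)]
      rw [h1, h2]
      calc ∑ i : {i : m // σ i ≠ 0}, ‖d i.1‖ ^ 2
          = ∑ i : {i : m // σ i ≠ 0}, ‖(inner ℂ (u i) (L w) : ℂ)‖ ^ 2 := by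
            apply Finset.sum_congr rfl; intro i _; rw [hdinner]
        _ ≤ ‖L w‖ ^ 2 := hbessel
        _ = nrm w ^ 2 := rfl
    have hfin : nrm (B *ᵥ w) ^ 2 ≤ nrm w ^ 2 := by
      rw [hnx, hx2]; exact hsum
    nlinarith [nrm_nonneg (B *ᵥ w), nrm_nonneg w]
  · rw [hB, Matrix.mul_sum]
    have : ∀ i, (A * ((c i : ℂ) • Matrix.vecMulVec (pv (b i)) (star (A *ᵥ pv (b i))))).trace
        = (σ i : ℂ) := by
      intro i
      rw [Matrix.mul_smul, Matrix.trace_smul, trace_mul_vecMulVec, dot_eigen2 A i i, if_pos rfl,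
        hlam]
      by_cases h0 : σ i = 0
      · have hci : c i = 0 := by simp only [hc]; rw [if_pos h0]
        rw [hci, h0]
        simp
      · have hci : c i = (σ i)⁻¹ := by simp only [hc]; rw [if_neg h0]
        rw [hci]
        have hne : ((σ i : ℂ)) ≠ 0 := Complex.ofReal_ne_zero.mpr h0
        push_cast
        field_simp
        ring
        rw [pow_two, mul_assoc, mul_inv_cancel₀ hne, mul_one]
    rw [Matrix.trace_sum, Finset.sum_congr rfl fun i _ => this i, traceNorm]
    push_cast
    rfl
end TN

open scoped NNReal
namespace TN
variable {m : Type*} [Fintype m] [DecidableEq m]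

lemma traceNorm_triangle (A A' : Matrix m m ℂ) :
    traceNorm (A + A') ≤ traceNorm A + traceNorm A' := by
  obtain ⟨B, hB1, hB2⟩ := exists_dual (A + A')
  have hB1' : ∀ w : m → ℂ, nrm (B *ᵥ w) ≤ 1 * nrm w := by
    intro w; rw [one_mul]; exact hB1 w
  have h1 : traceNorm (A + A') = (((A + A') * B).trace).re := by rw [hB2, Complex.ofReal_re]
  have h2 : ((A + A') * B).trace = (A * B).trace + (A' * B).trace := by
    rw [Matrix.add_mul, Matrix.trace_add]
  rw [h1, h2, Complex.add_re]
  have e1 : ((A * B).trace).re ≤ traceNorm A := by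
    calc ((A * B).trace).re ≤ ‖(A * B).trace‖ := Complex.re_le_norm _
    _ ≤ 1 * traceNorm A := trace_mul_le A B 1 hB1'
    _ = traceNorm A := one_mul _
  have e2 : ((A' * B).trace).re ≤ traceNorm A' := by
    calc ((A' * B).trace).re ≤ ‖(A' * B).trace‖ := Complex.re_le_norm _
    _ ≤ 1 * traceNorm A' := trace_mul_le A' B 1 hB1'
    _ = traceNorm A' := one_mul _
  linarith

lemma nrm_single (p : m) : nrm (Pi.single p (1 : ℂ)) = 1 := by
  rw [nrm_eq_sqrt]
  have : ∀ j, ‖(Pi.single p (1 : ℂ) : m → ℂ) j‖ ^ 2 = if j = p then 1 else 0 := by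
    intro j
    by_cases hj : j = p <;> simp [hj, Pi.single_apply]
  rw [Finset.sum_congr rfl fun j _ => this j]
  simp

lemma traceNorm_le_sum_abs (A : Matrix m m ℂ) :
    traceNorm A ≤ ∑ p, ∑ q, ‖A p q‖ := by
  obtain ⟨B, hB1, hB2⟩ := exists_dual A
  have hBent : ∀ q p, ‖B q p‖ ≤ 1 := by
    intro q p
    have h1 : (B *ᵥ Pi.single p 1) q = B q p := by
      simp [Matrix.mulVec_single]
    calc ‖B q p‖ = ‖(B *ᵥ Pi.single p 1) q‖ := by rw [h1]
    _ ≤ nrm (B *ᵥ Pi.single p 1) := apply_le_nrm _ _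
    _ ≤ nrm (Pi.single p (1:ℂ)) := hB1 _
    _ = 1 := nrm_single p
  have h1 : traceNorm A = ((A * B).trace).re := by rw [hB2, Complex.ofReal_re]
  have h2 : (A * B).trace = ∑ p, ∑ q, A p q * B q p := by
    simp [Matrix.trace, Matrix.diag, Matrix.mul_apply]
  calc traceNorm A = ((A * B).trace).re := h1
  _ ≤ ‖(A * B).trace‖ := Complex.re_le_norm _
  _ = ‖∑ p, ∑ q, A p q * B q p‖ := by rw [h2]
  _ ≤ ∑ p, ‖∑ q, A p q * B q p‖ := norm_sum_le _ _
  _ ≤ ∑ p, ∑ q, ‖A p q * B q p‖ := Finset.sum_le_sum fun p _ => norm_sum_le _ _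
  _ ≤ ∑ p, ∑ q, ‖A p q‖ := by
      apply Finset.sum_le_sum; intro p _
      apply Finset.sum_le_sum; intro q _
      rw [norm_mul]
      calc ‖A p q‖ * ‖B q p‖ ≤ ‖A p q‖ * 1 :=
        mul_le_mul_of_nonneg_left (hBent q p) (norm_nonneg _)
      _ = ‖A p q‖ := mul_one _

lemma abs_traceNorm_sub_le (A A' : Matrix m m ℂ) :
    |traceNorm A - traceNorm A'| ≤ ∑ p, ∑ q, ‖A p q - A' p q‖ := by
  have key : ∀ X Y : Matrix m m ℂ, traceNorm X - traceNorm Y ≤ ∑ p, ∑ q, ‖X p q - Y p q‖ := by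
    intro X Y
    have h1 : traceNorm X ≤ traceNorm Y + traceNorm (X - Y) := by
      have : X = Y + (X - Y) := by abel
      calc traceNorm X = traceNorm (Y + (X - Y)) := by rw [← this]
      _ ≤ _ := traceNorm_triangle _ _
    have h2 : traceNorm (X - Y) ≤ ∑ p, ∑ q, ‖X p q - Y p q‖ := by
      have := traceNorm_le_sum_abs (X - Y)
      simpa [Matrix.sub_apply] using this
    linarith
  rw [abs_sub_le_iff]
  constructor
  · exact key A A'
  · calc traceNorm A' - traceNorm A ≤ ∑ p, ∑ q, ‖A' p q - A p q‖ := key A' A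
    _ = ∑ p, ∑ q, ‖A p q - A' p q‖ := by
        apply Finset.sum_congr rfl; intro p _
        apply Finset.sum_congr rfl; intro q _
        rw [norm_sub_rev]

lemma continuous_traceNorm_pi :
    Continuous (fun g : m → m → ℂ => traceNorm (Matrix.of g)) := by
  apply LipschitzWith.continuous (K := (Fintype.card m : ℝ≥0) ^ 2)
  apply LipschitzWith.of_dist_le_mul
  intro g g'
  rw [Real.dist_eq]
  calc |traceNorm (Matrix.of g) - traceNorm (Matrix.of g')|
      ≤ ∑ p, ∑ q, ‖Matrix.of g p q - Matrix.of g' p q‖ := abs_traceNorm_sub_le _ _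
    _ ≤ ∑ p : m, ∑ q : m, dist g g' := by
        apply Finset.sum_le_sum; intro p _
        apply Finset.sum_le_sum; intro q _
        calc ‖Matrix.of g p q - Matrix.of g' p q‖ = dist (g p q) (g' p q) := by
              rw [dist_eq_norm]; rfl
        _ ≤ dist (g p) (g' p) := dist_le_pi_dist _ _ _
        _ ≤ dist g g' := dist_le_pi_dist _ _ _
    _ = ↑((Fintype.card m : ℝ≥0) ^ 2) * dist g g' := by
        simp only [Finset.sum_const, Finset.card_univ, nsmul_eq_mul]
        push_cast
        ring
end TN

namespace TN
open scoped Real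
variable {k s : ℕ} {n : Fin k → ℕ}

/-- phase `e^{-i p·x}` -/
def em (x : Fin k → ℝ) (p : Fin k → ℤ) : ℂ :=
  Complex.exp (-Complex.I * ∑ i, (p i : ℂ) * (x i : ℂ))

/-- phase `e^{+i q·x}` -/
def ep (x : Fin k → ℝ) (q : Fin k → ℤ) : ℂ :=
  Complex.exp (Complex.I * ∑ i, (q i : ℂ) * (x i : ℂ))

lemma em_norm (x : Fin k → ℝ) (p : Fin k → ℤ) : ‖em x p‖ = 1 := by
  rw [em, Complex.norm_exp]
  have h : (∑ i, (p i : ℂ) * (x i : ℂ)) = ((∑ i, (p i : ℝ) * x i : ℝ) : ℂ) := by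
    push_cast; ring
  rw [h]
  simp

lemma ep_norm (x : Fin k → ℝ) (q : Fin k → ℤ) : ‖ep x q‖ = 1 := by
  rw [ep, Complex.norm_exp]
  have h : (∑ i, (q i : ℂ) * (x i : ℂ)) = ((∑ i, (q i : ℝ) * x i : ℝ) : ℂ) := by
    push_cast; ring
  rw [h]
  simp

lemma em_mul_ep (x : Fin k → ℝ) (p q : Fin k → ℤ) :
    em x p * ep x q = em x (fun i => p i - q i) := by
  rw [em, ep, em, ← Complex.exp_add]
  congr 1
  have h : (∑ i, ((p i - q i : ℤ) : ℂ) * (x i : ℂ))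
      = ∑ i, (p i : ℂ) * (x i : ℂ) - ∑ i, (q i : ℂ) * (x i : ℂ) := by
    rw [← Finset.sum_sub_distrib]
    apply Finset.sum_congr rfl; intro i _
    push_cast; ring
  rw [h]
  ring

lemma conj_em (x : Fin k → ℝ) (p : Fin k → ℤ) :
    (starRingEnd ℂ) (em x p) = ep x p := by
  rw [em, ep, ← Complex.exp_conj]
  congr 1
  have h : (∑ i, (p i : ℂ) * (x i : ℂ)) = ((∑ i, (p i : ℝ) * x i : ℝ) : ℂ) := by
    push_cast; ring
  rw [h, _root_.map_mul, map_neg, Complex.conj_I, Complex.conj_ofReal]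
  ring

lemma em_continuous (p : Fin k → ℤ) : Continuous (fun x : Fin k → ℝ => em x p) := by
  unfold em
  fun_prop

lemma ep_continuous (q : Fin k → ℤ) : Continuous (fun x : Fin k → ℝ => ep x q) := by
  unfold ep
  fun_prop

/-- The compression matrix. -/
def Emat (n : Fin k → ℕ) (s : ℕ) (x : Fin k → ℝ) :
    Matrix ((∀ i, Fin (n i)) × Fin s) (Fin s) ℂ :=
  Matrix.of fun P b => em x (fun i => (P.1 i : ℤ)) * (if P.2 = b then 1 else 0)

lemma nrm_Emat_mulVec (x : Fin k → ℝ) (w : Fin s → ℂ) :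
    nrm (Emat n s x *ᵥ w) =
      Real.sqrt (Fintype.card (∀ i, Fin (n i))) * nrm w := by
  have happ : ∀ P : (∀ i, Fin (n i)) × Fin s,
      (Emat n s x *ᵥ w) P = em x (fun i => (P.1 i : ℤ)) * w P.2 := by
    intro P
    simp [Emat, Matrix.mulVec, dotProduct, ite_mul, Finset.sum_ite_eq',
      Finset.mem_univ]
  rw [nrm_eq_sqrt, nrm_eq_sqrt, Finset.sum_congr rfl fun P _ => by rw [happ P]]
  rw [← Real.sqrt_mul (by positivity)]
  congr 1
  rw [Fintype.sum_prod_type]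
  simp only [norm_mul, em_norm, one_mul, mul_pow, one_pow]
  rw [Finset.sum_const, Finset.card_univ, nsmul_eq_mul]

lemma nrm_EmatH_mulVec (x : Fin k → ℝ) (u : ((∀ i, Fin (n i)) × Fin s) → ℂ) :
    nrm ((Emat n s x)ᴴ *ᵥ u) ≤
      Real.sqrt (Fintype.card (∀ i, Fin (n i))) * nrm u := by
  set N := (Fintype.card (∀ i, Fin (n i)) : ℝ) with hN
  have hNnn : (0:ℝ) ≤ N := by positivity
  have happ : ∀ b, ((Emat n s x)ᴴ *ᵥ u) b =
      star (fun p : ∀ i, Fin (n i) => em x (fun i => (p i : ℤ))) ⬝ᵥ (fun p => u (p, b)) := by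
    intro b
    simp only [Matrix.mulVec, dotProduct, Matrix.conjTranspose_apply, Emat,
      Matrix.of_apply, star_mul', Pi.star_apply, RCLike.star_def]
    rw [Fintype.sum_prod_type]
    apply Finset.sum_congr rfl; intro p _
    rw [Finset.sum_eq_single b]
    · simp
    · intro c _ hc
      simp [hc]
    · simp
  have hev : nrm (fun p : ∀ i, Fin (n i) => em x (fun i => (p i : ℤ))) = Real.sqrt N := by
    rw [nrm_eq_sqrt]
    congr 1
    simp only [em_norm, one_pow]
    rw [Finset.sum_const, Finset.card_univ, nsmul_eq_mul, mul_one, hN]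
  have hb : ∀ b, ‖((Emat n s x)ᴴ *ᵥ u) b‖ ≤
      Real.sqrt N * Real.sqrt (∑ p, ‖u (p, b)‖ ^ 2) := by
    intro b
    rw [happ b]
    calc ‖star (fun p : ∀ i, Fin (n i) => em x (fun i => (p i : ℤ))) ⬝ᵥ (fun p => u (p, b))‖
        ≤ nrm (fun p : ∀ i, Fin (n i) => em x (fun i => (p i : ℤ))) * nrm (fun p => u (p, b)) :=
          cs_dot _ _
      _ = Real.sqrt N * Real.sqrt (∑ p, ‖u (p, b)‖ ^ 2) := by rw [hev, nrm_eq_sqrt]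
  rw [nrm_eq_sqrt]
  have h1 : ∑ b, ‖((Emat n s x)ᴴ *ᵥ u) b‖ ^ 2 ≤ ∑ b, N * (∑ p, ‖u (p, b)‖ ^ 2) := by
    apply Finset.sum_le_sum; intro b _
    calc ‖((Emat n s x)ᴴ *ᵥ u) b‖ ^ 2
        ≤ (Real.sqrt N * Real.sqrt (∑ p, ‖u (p, b)‖ ^ 2)) ^ 2 := by
          apply pow_le_pow_left₀ (norm_nonneg _) (hb b)
      _ = N * (∑ p, ‖u (p, b)‖ ^ 2) := by
          rw [mul_pow, Real.sq_sqrt hNnn, Real.sq_sqrt (by positivity)]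
  calc Real.sqrt (∑ b, ‖((Emat n s x)ᴴ *ᵥ u) b‖ ^ 2)
      ≤ Real.sqrt (∑ b, N * (∑ p, ‖u (p, b)‖ ^ 2)) := Real.sqrt_le_sqrt h1
    _ = Real.sqrt N * nrm u := by
        rw [← Finset.mul_sum, Real.sqrt_mul hNnn, nrm_eq_sqrt]
        congr 2
        rw [Fintype.sum_prod_type]
        rw [Finset.sum_comm]

lemma nrm_Cmat_mulVec (x : Fin k → ℝ) (B : Matrix ((∀ i, Fin (n i)) × Fin s)
      ((∀ i, Fin (n i)) × Fin s) ℂ)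
    (hB : ∀ w, nrm (B *ᵥ w) ≤ nrm w) (w : Fin s → ℂ) :
    nrm (((Emat n s x)ᴴ * B * Emat n s x) *ᵥ w) ≤
      (Fintype.card (∀ i, Fin (n i)) : ℝ) * nrm w := by
  set N := (Fintype.card (∀ i, Fin (n i)) : ℝ) with hN
  have hNnn : (0:ℝ) ≤ N := by positivity
  have h1 : ((Emat n s x)ᴴ * B * Emat n s x) *ᵥ w
      = (Emat n s x)ᴴ *ᵥ (B *ᵥ (Emat n s x *ᵥ w)) := by
    rw [Matrix.mulVec_mulVec, Matrix.mulVec_mulVec]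
  rw [h1]
  calc nrm ((Emat n s x)ᴴ *ᵥ (B *ᵥ (Emat n s x *ᵥ w)))
      ≤ Real.sqrt N * nrm (B *ᵥ (Emat n s x *ᵥ w)) := nrm_EmatH_mulVec x _
    _ ≤ Real.sqrt N * nrm (Emat n s x *ᵥ w) :=
        mul_le_mul_of_nonneg_left (hB _) (Real.sqrt_nonneg _)
    _ = Real.sqrt N * (Real.sqrt N * nrm w) := by rw [nrm_Emat_mulVec]
    _ = N * nrm w := by rw [← mul_assoc, Real.mul_self_sqrt hNnn]
end TN

namespace TN
variable {k s : ℕ} {n : Fin k → ℕ}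

lemma sum_swap_pairs {α β γ δ : Type*} [Fintype α] [Fintype β] [Fintype γ] [Fintype δ]
    (t : α → β → γ → δ → ℂ) :
    ∑ a, ∑ b, ∑ c, ∑ d, t a b c d = ∑ c, ∑ d, ∑ a, ∑ b, t a b c d := by
  have h1 : ∑ z : α × β, ∑ w : γ × δ, t z.1 z.2 w.1 w.2
      = ∑ a, ∑ b, ∑ c, ∑ d, t a b c d := by
    simp only [Fintype.sum_prod_type]
  have h2 : ∑ w : γ × δ, ∑ z : α × β, t z.1 z.2 w.1 w.2
      = ∑ c, ∑ d, ∑ a, ∑ b, t a b c d := by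
    simp only [Fintype.sum_prod_type]
  rw [← h1, ← h2, Finset.sum_comm]

lemma trace_f_Cmat (x : Fin k → ℝ) (g : Matrix (Fin s) (Fin s) ℂ)
    (B : Matrix ((∀ i, Fin (n i)) × Fin s) ((∀ i, Fin (n i)) × Fin s) ℂ) :
    (g * ((Emat n s x)ᴴ * B * Emat n s x)).trace
      = ∑ P : (∀ i, Fin (n i)) × Fin s, ∑ Q : (∀ i, Fin (n i)) × Fin s,
          (em x (fun i => (P.1 i : ℤ)) * ep x (fun i => (Q.1 i : ℤ)) * g P.2 Q.2) * B Q P := by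
  classical
  have hconjE : ∀ (P : (∀ i, Fin (n i)) × Fin s) (b : Fin s),
      star (Emat n s x P b)
        = ep x (fun i => (P.1 i : ℤ)) * (if P.2 = b then 1 else 0) := by
    intro P b
    rw [RCLike.star_def, Emat, Matrix.of_apply, _root_.map_mul, conj_em]
    congr 1
    by_cases h : P.2 = b <;> simp [h]
  have hM : ∀ b a, ((Emat n s x)ᴴ * B * Emat n s x) b a
      = ∑ Q : (∀ i, Fin (n i)) × Fin s, ∑ P : (∀ i, Fin (n i)) × Fin s,
          (ep x (fun i => (Q.1 i : ℤ)) * (if Q.2 = b then 1 else 0)) *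
          (B Q P * (em x (fun i => (P.1 i : ℤ)) * (if P.2 = a then 1 else 0))) := by
    intro b a
    rw [Matrix.mul_apply]
    rw [Finset.sum_congr rfl (fun P _ => by rw [Matrix.mul_apply, Finset.sum_mul])]
    rw [Finset.sum_comm]
    apply Finset.sum_congr rfl; intro Q _
    apply Finset.sum_congr rfl; intro P _
    rw [Matrix.conjTranspose_apply, hconjE]
    simp only [Emat, Matrix.of_apply]
    ring
  have hL : (g * ((Emat n s x)ᴴ * B * Emat n s x)).trace
      = ∑ a, ∑ b, g a b * ((Emat n s x)ᴴ * B * Emat n s x) b a := by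
    simp [Matrix.trace, Matrix.diag, Matrix.mul_apply]
  rw [hL]
  rw [Finset.sum_congr rfl (fun a _ => Finset.sum_congr rfl (fun b _ => by rw [hM b a]))]
  simp only [Finset.mul_sum]
  rw [sum_swap_pairs (fun a b Q P => g a b *
    ((ep x (fun i => (Q.1 i : ℤ)) * (if Q.2 = b then 1 else 0)) *
      (B Q P * (em x (fun i => (P.1 i : ℤ)) * (if P.2 = a then 1 else 0)))))]
  rw [Finset.sum_comm]
  apply Finset.sum_congr rfl; intro P _
  apply Finset.sum_congr rfl; intro Q _
  rw [Finset.sum_eq_single P.2]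
  · rw [Finset.sum_eq_single Q.2]
    · simp only [eq_self_iff_true, if_true, mul_one]
      ring
    · intro b _ hb
      simp [Ne.symm hb]
    · simp
  · intro a _ ha
    rw [Finset.sum_eq_single Q.2]
    · simp [Ne.symm ha]
    · intro b _ hb
      simp [Ne.symm hb]
    · simp
  · simp
end TN


/-- Trace-norm bound for multilevel block Toeplitz matrices:
`‖T_n(f)‖₁ ≤ (n̂/(2π)^k) ‖f‖_{L¹}`. -/
theorem stmt10 {k s : ℕ} (f : (Fin k → ℝ) → Matrix (Fin s) (Fin s) ℂ)
    (hf : ∀ i j, IntegrableOn (fun x => f x i j) (Ik k)) (n : Fin k → ℕ) :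
    traceNorm (toeplitz k s n f) ≤
      ((∏ i, (n i : ℝ)) / (2 * π) ^ k) * ∫ x in Ik k, traceNorm (f x) := by
  classical
  set μ := (volume : Measure (Fin k → ℝ)).restrict (Ik k) with hμ
  have hmk : ∀ i j, AEStronglyMeasurable (fun x => f x i j) μ := fun i j => (hf i j).1
  -- measurability and integrability of x ↦ traceNorm (f x)
  set F : (Fin k → ℝ) → Fin s → Fin s → ℂ := fun x i j => (hmk i j).mk _ x with hFd
  have hFmeas : Measurable F := by
    apply measurable_pi_lambda; intro i
    apply measurable_pi_lambda; intro j
    exact ((hmk i j).stronglyMeasurable_mk).measurable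
  have hFae : ∀ᵐ x ∂μ, (fun i j => f x i j) = F x := by
    have h1 : ∀ᵐ x ∂μ, ∀ i j, f x i j = F x i j := by
      rw [ae_all_iff]
      intro i
      rw [ae_all_iff]
      intro j
      exact (hmk i j).ae_eq_mk
    filter_upwards [h1] with x hx
    funext i j; exact hx i j
  have htrmeas : AEStronglyMeasurable (fun x => traceNorm (f x)) μ := by
    have hc : Continuous (fun g : Fin s → Fin s → ℂ => traceNorm (Matrix.of g)) :=
      TN.continuous_traceNorm_pi
    have h0 : AEStronglyMeasurable (fun x => traceNorm (Matrix.of (F x))) μ :=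
      (hc.measurable.comp hFmeas).aestronglyMeasurable
    apply h0.congr
    filter_upwards [hFae] with x hx
    rw [← hx]
    rfl
  have htrint : Integrable (fun x => traceNorm (f x)) μ := by
    apply Integrable.mono' (g := fun x => ∑ i, ∑ j, ‖f x i j‖) ?_ htrmeas ?_
    · apply integrable_finset_sum; intro i _
      apply integrable_finset_sum; intro j _
      exact (hf i j).norm
    · filter_upwards with x
      rw [Real.norm_eq_abs, abs_of_nonneg (TN.traceNorm_nonneg _)]
      exact TN.traceNorm_le_sum_abs (f x)
  -- duality witness
  obtain ⟨B, hB1, hB2⟩ := TN.exists_dual (toeplitz k s n f)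
  set N : ℝ := (Fintype.card (∀ i, Fin (n i)) : ℝ) with hNd
  have hNprod : N = ∏ i, (n i : ℝ) := by simp [hNd, Fintype.card_pi]
  have hNnn : 0 ≤ N := by rw [hNd]; positivity
  set κ : ℂ := (((2 * π : ℝ) ^ k)⁻¹ : ℂ) with hκ
  -- integrability of each term
  have hint : ∀ (P Q : (∀ i, Fin (n i)) × Fin s), Integrable (fun x =>
      (TN.em x (fun i => (P.1 i : ℤ)) * TN.ep x (fun i => (Q.1 i : ℤ)) * f x P.2 Q.2)
        * B Q P) μ := by
    intro P Q
    apply Integrable.mul_const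
    have : Integrable (fun x =>
        (TN.em x (fun i => (P.1 i : ℤ)) * TN.ep x (fun i => (Q.1 i : ℤ))) * f x P.2 Q.2) μ := by
      apply Integrable.bdd_mul (c := 1) (hf P.2 Q.2)
      · exact ((TN.em_continuous _).mul (TN.ep_continuous _)).aestronglyMeasurable
      · refine ae_of_all _ (fun x => ?_)
        rw [norm_mul, TN.em_norm, TN.ep_norm]; norm_num
    apply this.congr
    filter_upwards with x
    ring
  -- entry formula
  have hTentry : ∀ P Q : (∀ i, Fin (n i)) × Fin s, toeplitz k s n f P Q
      = κ * ∫ x in Ik k,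
          TN.em x (fun i => (P.1 i : ℤ)) * TN.ep x (fun i => (Q.1 i : ℤ)) * f x P.2 Q.2 := by
    intro P Q
    show fourierCoeffM k s f (fun i => (P.1 i : ℤ) - (Q.1 i : ℤ)) P.2 Q.2 = _
    rw [fourierCoeffM]
    congr 1
    apply integral_congr_ae
    filter_upwards with x
    rw [TN.em_mul_ep]
    rfl
  -- trace formula
  have htrace : (toeplitz k s n f * B).trace
      = κ * ∫ x in Ik k, (f x * ((TN.Emat n s x)ᴴ * B * TN.Emat n s x)).trace := by
    have h1 : (toeplitz k s n f * B).trace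
        = ∑ P, ∑ Q, toeplitz k s n f P Q * B Q P := by
      simp [Matrix.trace, Matrix.diag, Matrix.mul_apply]
    rw [h1]
    have h2 : ∀ P Q : (∀ i, Fin (n i)) × Fin s, toeplitz k s n f P Q * B Q P
        = κ * ∫ x in Ik k,
            (TN.em x (fun i => (P.1 i : ℤ)) * TN.ep x (fun i => (Q.1 i : ℤ)) * f x P.2 Q.2)
              * B Q P := by
      intro P Q
      rw [hTentry P Q, mul_assoc]
      congr 1
      rw [← integral_mul_const]
    rw [Finset.sum_congr rfl fun P _ => Finset.sum_congr rfl fun Q _ => h2 P Q]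
    simp only [← Finset.mul_sum]
    congr 1
    have h3 : ∀ P : (∀ i, Fin (n i)) × Fin s, ∑ Q, (∫ x in Ik k,
        (TN.em x (fun i => (P.1 i : ℤ)) * TN.ep x (fun i => (Q.1 i : ℤ)) * f x P.2 Q.2) * B Q P)
        = ∫ x in Ik k, ∑ Q, (TN.em x (fun i => (P.1 i : ℤ)) * TN.ep x (fun i => (Q.1 i : ℤ))
            * f x P.2 Q.2) * B Q P :=
      fun P => (integral_finset_sum _ (fun Q _ => hint P Q)).symm
    rw [Finset.sum_congr rfl fun P _ => h3 P]
    rw [← integral_finset_sum]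
    · apply integral_congr_ae
      filter_upwards with x
      exact (TN.trace_f_Cmat x (f x) B).symm
    · intro P _
      exact integrable_finset_sum _ (fun Q _ => hint P Q)
  -- pointwise bound
  have hpt : ∀ x, ‖(f x * ((TN.Emat n s x)ᴴ * B * TN.Emat n s x)).trace‖
      ≤ N * traceNorm (f x) := by
    intro x
    exact TN.trace_mul_le (f x) _ N (fun w => TN.nrm_Cmat_mulVec x B hB1 w)
  -- final chain
  have hre : traceNorm (toeplitz k s n f) = ((toeplitz k s n f * B).trace).re := by
    rw [hB2, Complex.ofReal_re]
  have hκn : ‖κ‖ = ((2 * π) ^ k)⁻¹ := by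
    rw [hκ, norm_inv, norm_pow, Complex.norm_real, Real.norm_eq_abs, abs_of_nonneg (by positivity)]
  rw [hre, htrace]
  calc (κ * ∫ x in Ik k, (f x * ((TN.Emat n s x)ᴴ * B * TN.Emat n s x)).trace).re
      ≤ ‖κ * ∫ x in Ik k, (f x * ((TN.Emat n s x)ᴴ * B * TN.Emat n s x)).trace‖ :=
        Complex.re_le_norm _
    _ = ((2 * π) ^ k)⁻¹ *
        ‖∫ x in Ik k, (f x * ((TN.Emat n s x)ᴴ * B * TN.Emat n s x)).trace‖ := by
        rw [norm_mul, hκn]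
    _ ≤ ((2 * π) ^ k)⁻¹ *
        ∫ x in Ik k, ‖(f x * ((TN.Emat n s x)ᴴ * B * TN.Emat n s x)).trace‖ := by
        apply mul_le_mul_of_nonneg_left (norm_integral_le_integral_norm _) (by positivity)
    _ ≤ ((2 * π) ^ k)⁻¹ * ∫ x in Ik k, N * traceNorm (f x) := by
        apply mul_le_mul_of_nonneg_left _ (by positivity)
        apply integral_mono_of_nonneg
        · filter_upwards with x; exact norm_nonneg _
        · exact htrint.const_mul N
        · filter_upwards with x; exact hpt x
    _ = ((∏ i, (n i : ℝ)) / (2 * π) ^ k) * ∫ x in Ik k, traceNorm (f x) := by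
        rw [integral_const_mul, ← hNprod]
        ring

end
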